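/- Fix L, r_min, M > 0 with L < r_min and r > r_min. Then lim_{δ → 0+} F_δ(r) = -M · (r_min/r)^{1/log(r_min/L)} · log(r/L)/log(r_min/L), where F_δ(r) = M (r_min/r)^{δ/((r_min/L)^δ - 1)} ((L/r)^δ - 1)/(1 - (L/r_min)^δ). -/
import Mathlib


open Real Filter Set

lemma rpow_slope_tendsto {b : ℝ} (hb : 0 < b) :
    Tendsto (fun δ : ℝ => (b ^ δ - 1) / δ) (nhdsWithin 0 (Set.Ioi 0))
      (nhds (Real.log b)) := by
  have h : HasDerivAt (fun x : ℝ => b ^ x) (b ^ (0:ℝ) * Real.log b) 0 :=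
    (Real.hasStrictDerivAt_const_rpow hb 0).hasDerivAt
  have h2 := hasDerivAt_iff_tendsto_slope.1 h
  rw [Real.rpow_zero, one_mul] at h2
  have h3 := h2.mono_left (nhdsWithin_mono 0 (fun x hx => (ne_of_gt hx : x ≠ 0)))
  refine h3.congr (fun δ => ?_)
  simp [slope_def_field, div_eq_inv_mul]

theorem ljf_limit_delta_zero (L rmin M : ℝ) (hL : 0 < L) (hrmin : 0 < rmin)
    (hM : 0 < M) (hLr : L < rmin) (r : ℝ) (hr : rmin < r) :
    Tendsto
      (fun δ : ℝ =>
        M * (rmin / r) ^ (δ / ((rmin / L) ^ δ - 1)) *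
          ((L / r) ^ δ - 1) / (1 - (L / rmin) ^ δ))
      (nhdsWithin 0 (Set.Ioi 0))
      (nhds (-M * (rmin / r) ^ (1 / Real.log (rmin / L)) *
        Real.log (r / L) / Real.log (rmin / L))) := by
  have hr0 : 0 < r := hrmin.trans hr
  have ha1 : 1 < rmin / L := (one_lt_div hL).2 hLr
  have hla : 0 < Real.log (rmin / L) := Real.log_pos ha1
  have hb : 0 < L / r := div_pos hL hr0
  have hd : 0 < L / rmin := div_pos hL hrmin
  have hc : 0 < rmin / r := div_pos hrmin hr0
  -- sub-limits
  have T1 : Tendsto (fun δ : ℝ => ((L / r) ^ δ - 1) / δ) (nhdsWithin 0 (Set.Ioi 0))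
      (nhds (Real.log (L / r))) := rpow_slope_tendsto hb
  have T2 : Tendsto (fun δ : ℝ => (1 - (L / rmin) ^ δ) / δ) (nhdsWithin 0 (Set.Ioi 0))
      (nhds (-Real.log (L / rmin))) := by
    have := (rpow_slope_tendsto hd).neg
    refine this.congr (fun δ => ?_)
    ring
  have hlogd : -Real.log (L / rmin) = Real.log (rmin / L) := by
    rw [← Real.log_inv, inv_div]
  rw [hlogd] at T2
  have T3 : Tendsto (fun δ : ℝ => δ / ((rmin / L) ^ δ - 1)) (nhdsWithin 0 (Set.Ioi 0))
      (nhds (1 / Real.log (rmin / L))) := by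
    have := (rpow_slope_tendsto (div_pos hrmin hL)).inv₀ (ne_of_gt hla)
    rw [← one_div] at this
    refine this.congr (fun δ => ?_)
    rw [inv_div]
  have T4 : Tendsto (fun δ : ℝ => (rmin / r) ^ (δ / ((rmin / L) ^ δ - 1)))
      (nhdsWithin 0 (Set.Ioi 0))
      (nhds ((rmin / r) ^ (1 / Real.log (rmin / L)))) :=
    (tendsto_const_nhds.rpow T3 (Or.inl (ne_of_gt hc)))
  have key : Tendsto
      (fun δ : ℝ => M * (rmin / r) ^ (δ / ((rmin / L) ^ δ - 1)) *
          ((((L / r) ^ δ - 1) / δ) / ((1 - (L / rmin) ^ δ) / δ)))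
      (nhdsWithin 0 (Set.Ioi 0))
      (nhds (M * (rmin / r) ^ (1 / Real.log (rmin / L)) *
          (Real.log (L / r) / Real.log (rmin / L)))) :=
    ((tendsto_const_nhds.mul T4).mul (T1.div T2 (ne_of_gt hla)))
  have heq : (-M * (rmin / r) ^ (1 / Real.log (rmin / L)) *
        Real.log (r / L) / Real.log (rmin / L)) =
      M * (rmin / r) ^ (1 / Real.log (rmin / L)) *
          (Real.log (L / r) / Real.log (rmin / L)) := by
    have h5 : Real.log (L / r) = -Real.log (r / L) := by
      rw [← Real.log_inv, inv_div]
    rw [h5]; ring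
  rw [heq]
  refine key.congr' ?_
  filter_upwards [self_mem_nhdsWithin] with δ (hδ : 0 < δ)
  have hδ' : δ ≠ 0 := ne_of_gt hδ
  field_simp
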